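/- Let B be a barrier and k ≥ 1. For every k-bounded coloring f : B → ℕ there exists a progressive coloring g : B → [ℕ]^{<ω} with |g(s)| ≤ k for every s ∈ B, such that every infinite set H ⊆ base(B) that is free for g is a rainbow for f. -/
import Mathlib


/-- The base of a family of finite sets: the union of its members. -/
def BarrierBase (B : Set (Finset ℕ)) : Set ℕ :=
  ⋃ s ∈ B, (↑s : Set ℕ)

/-- `s` is an initial segment of `X` under the increasing enumeration. -/
def IsInitSeg (s : Finset ℕ) (X : Set ℕ) : Prop :=
  ↑s ⊆ X ∧ ∀ x ∈ X, x ∉ s → ∀ y ∈ s, y < x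

/-- `B` is a barrier: its base is infinite, every infinite subset of the base
has a member of `B` as an initial segment, and no member of `B` is a proper
subset of another. -/
def IsBarrier (B : Set (Finset ℕ)) : Prop :=
  (BarrierBase B).Infinite ∧
  (∀ X : Set ℕ, X ⊆ BarrierBase B → X.Infinite → ∃ s ∈ B, IsInitSeg s X) ∧
  (∀ s ∈ B, ∀ t ∈ B, ¬ s ⊂ t)

lemma sup_id_mem (u : Finset ℕ) (h : u.Nonempty) : u.sup id ∈ u := by
  rw [← Finset.sup'_eq_sup h id]
  exact Finset.sup'_mem (↑u) (fun a ha b hb => by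
    rcases le_total a b with hab | hab
    · simpa [sup_eq_right.mpr hab] using hb
    · simpa [sup_eq_left.mpr hab] using ha) u h id (fun b hb => hb)

/-- for a barrier `B`, `k ≥ 1` and a `k`-bounded `f : B → ℕ`,
there is a progressive `g : B → [ℕ]^{<ω}` with `|g s| ≤ k` on `B` such that
every infinite `g`-free `H ⊆ base B` is an `f`-rainbow. -/
theorem stmt17 (B : Set (Finset ℕ)) (hB : IsBarrier B) (k : ℕ) (hk : 1 ≤ k)
    (f : Finset ℕ → ℕ)
    (hf : ∀ c : ℕ, ∃ T : Finset (Finset ℕ), T.card ≤ k ∧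
      ∀ s ∈ B, f s = c → s ∈ T) :
    ∃ g : Finset ℕ → Finset ℕ,
      (∀ s ∈ B, (g s).card ≤ k) ∧
      (∀ s ∈ B, ∀ y ∈ g s, sInf (↑s : Set ℕ) ≤ y) ∧
      ∀ H : Set ℕ, H ⊆ BarrierBase B → H.Infinite →
        (∀ s ∈ B, ↑s ⊆ H → ∀ y ∈ g s, y ∈ H → y ∈ s) →
        ∀ s ∈ B, ∀ t ∈ B, ↑s ⊆ H → ↑t ⊆ H → f s = f t → s = t := by
  classical
  set g : Finset ℕ → Finset ℕ := fun s =>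
    ((hf (f s)).choose.image (fun t => (t \ s).sup id)).filter
      (fun y => sInf (↑s : Set ℕ) ≤ y) with hg
  refine ⟨g, ?_, ?_, ?_⟩
  · intro s _
    calc (g s).card ≤ ((hf (f s)).choose.image (fun t => (t \ s).sup id)).card :=
          Finset.card_filter_le _ _
      _ ≤ (hf (f s)).choose.card := Finset.card_image_le
      _ ≤ k := (hf (f s)).choose_spec.1
  · intro s _ y hy
    exact (Finset.mem_filter.mp hy).2
  · intro H _ _ hfree s hs t ht hsH htH hfst
    by_contra hne
    -- both differences are nonempty
    have hts : (t \ s).Nonempty := by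
      rw [Finset.sdiff_nonempty]
      intro hsub
      exact hB.2.2 t ht s hs (lt_of_le_of_ne hsub (fun h => hne h.symm))
    have hst : (s \ t).Nonempty := by
      rw [Finset.sdiff_nonempty]
      intro hsub
      exact hB.2.2 s hs t ht (lt_of_le_of_ne hsub hne)
    set a := (t \ s).sup id with ha
    set b := (s \ t).sup id with hb
    have hamem : a ∈ t \ s := sup_id_mem _ hts
    have hbmem : b ∈ s \ t := sup_id_mem _ hst
    have hat : a ∈ t := (Finset.mem_sdiff.mp hamem).1
    have hbs : b ∈ s := (Finset.mem_sdiff.mp hbmem).1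
    -- key claim: sInf s ≤ a or sInf t ≤ b
    have hkey : sInf (↑s : Set ℕ) ≤ a ∨ sInf (↑t : Set ℕ) ≤ b := by
      by_contra hcon
      push_neg at hcon
      have h1 : sInf (↑s : Set ℕ) ≤ b := Nat.sInf_le hbs
      have h2 : sInf (↑t : Set ℕ) ≤ a := Nat.sInf_le hat
      omega
    rcases hkey with hka | hkb
    · have hmemT : t ∈ (hf (f s)).choose := (hf (f s)).choose_spec.2 t ht hfst.symm
      have haga : a ∈ g s := by
        rw [hg]
        simp only [Finset.mem_filter, Finset.mem_image]
        exact ⟨⟨t, hmemT, rfl⟩, hka⟩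
      have := hfree s hs hsH a haga (htH hat)
      exact (Finset.mem_sdiff.mp hamem).2 this
    · have hmemT : s ∈ (hf (f t)).choose := (hf (f t)).choose_spec.2 s hs hfst
      have hbgb : b ∈ g t := by
        rw [hg]
        simp only [Finset.mem_filter, Finset.mem_image]
        exact ⟨⟨s, hmemT, rfl⟩, hkb⟩
      have := hfree t ht htH b hbgb (hsH hbs)
      exact (Finset.mem_sdiff.mp hbmem).2 this
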